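/- arXiv:1808.10151 — 6 statements merged into one kernel-verified Lean document; each statement's English description precedes it below -/
import Mathlib

section
/- Let $\ell \geq 1$ and let $x, y < 2^{\ell}$ be natural numbers with binary representations $x = x_{\ell-1}\cdots x_0$ and $y = y_{\ell-1}\cdots y_0$ (so $x_i, y_i \in \{0,1\}$ is the $i$-th bit, embedded into $\mathbb{Z}/2\mathbb{Z}$). For each $i$ with $0 \le i < \ell$, define in $\mathbb{Z}/2\mathbb{Z}$: $d_i = y_i(1 - x_i)$, $e_j = x_j + y_j + 1$, and $c_i = d_i \prod_{j=i+1}^{\ell-1} e_j$. Then $c_i = 1$ if and only if ($x_j = y_j$ for all $j$ with $i < j < \ell$) and $x_i = 0$ and $y_i = 1$; i.e., $c_i = 1$ exactly when $i$ is the most significant bit position at which $x$ and $y$ differ and at that position the bit of $y$ exceeds the bit of $x$. -/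
/-- The `i`-th binary digit of a natural number, embedded into `ℤ/2ℤ`. -/
def natBit (n i : ℕ) : ZMod 2 := if n.testBit i then 1 else 0

lemma natBit_factor (x y j : ℕ) :
    natBit x j + natBit y j + 1 = if x.testBit j = y.testBit j then 1 else 0 := by
  unfold natBit
  cases x.testBit j <;> cases y.testBit j <;> simp <;> decide

lemma natBit_d (x y i : ℕ) :
    natBit y i * (1 - natBit x i) =
      if x.testBit i = false ∧ y.testBit i = true then 1 else 0 := by
  unfold natBit
  cases x.testBit i <;> cases y.testBit i <;> simp <;> decide

/-- In the secure comparison protocol `π_DC`, the value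
`c_i = y_i (1 - x_i) ∏_{j=i+1}^{ℓ-1} (x_j + y_j + 1)` (arithmetic in `ℤ/2ℤ`)
equals `1` iff `i` is the most significant bit position (below `ℓ`) at which
`x` and `y` differ, and there the bit of `y` exceeds the bit of `x`. -/
theorem secure_comparison_ci_characterization (ℓ : ℕ) (hℓ : 1 ≤ ℓ)
    (x y : ℕ) (hx : x < 2 ^ ℓ) (hy : y < 2 ^ ℓ)
    (i : ℕ) (hi : i < ℓ) :
    (natBit y i * (1 - natBit x i)) *
        (∏ j ∈ Finset.Ico (i + 1) ℓ, (natBit x j + natBit y j + 1)) = 1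
      ↔ (∀ j, i < j → j < ℓ → x.testBit j = y.testBit j) ∧
          x.testBit i = false ∧ y.testBit i = true := by
  simp only [natBit_factor, natBit_d, Finset.prod_boole]
  by_cases h1 : x.testBit i = false ∧ y.testBit i = true
  · by_cases h2 : ∀ j ∈ Finset.Ico (i + 1) ℓ, x.testBit j = y.testBit j
    · rw [if_pos h1, if_pos h2]
      simp only [one_mul]
      constructor
      · intro _
        exact ⟨fun j hj hj' => h2 j (Finset.mem_Ico.mpr ⟨hj, hj'⟩), h1⟩
      · intro _; trivial
    · rw [if_neg h2]
      simp only [mul_zero]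
      constructor
      · intro h; exact absurd h (by decide)
      · rintro ⟨hall, -⟩
        exact absurd (fun j hj => by
          obtain ⟨h3, h4⟩ := Finset.mem_Ico.mp hj
          exact hall j h3 h4) h2
  · rw [if_neg h1]
    simp only [zero_mul]
    constructor
    · intro h; exact absurd h (by decide)
    · rintro ⟨-, h⟩; exact absurd h h1
end

section
/- Let $\ell \geq 1$ and let $x, y < 2^{\ell}$ be natural numbers with bits $x_i, y_i \in \mathbb{Z}/2\mathbb{Z}$ for $0 \le i < \ell$. Define $c_i = y_i(1 - x_i)\prod_{j=i+1}^{\ell-1}(x_j + y_j + 1)$ in $\mathbb{Z}/2\mathbb{Z}$. Then: (a) $x < y$ if and only if there exists $i < \ell$ with $c_i = 1$; (b) there is at most one index $i < \ell$ with $c_i = 1$; consequently, if $x \geq y$ then $c_i = 0$ for all $i < \ell$, and if $x < y$ then exactly one $c_i$ equals $1$. -/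
/-- The values `c_i = y_i (1 - x_i) ∏_{j=i+1}^{ℓ-1} (x_j + y_j + 1)` of the
secure comparison protocol `π_DC`. -/
def compC (ℓ x y i : ℕ) : ZMod 2 :=
  natBit y i * (1 - natBit x i) *
    ∏ j ∈ Finset.Ico (i + 1) ℓ, (natBit x j + natBit y j + 1)

lemma factor_eq_one_iff (x y j : ℕ) :
    natBit x j + natBit y j + 1 = 1 ↔ (x.testBit j = y.testBit j) := by
  unfold natBit
  cases hx : x.testBit j <;> cases hy : y.testBit j <;> simp <;> decide

lemma compC_eq_one_iff (ℓ x y i : ℕ) :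
    compC ℓ x y i = 1 ↔
      (y.testBit i = true ∧ x.testBit i = false ∧
        ∀ j, i < j → j < ℓ → x.testBit j = y.testBit j) := by
  have hmul : ∀ a b : ZMod 2, a * b = 1 ↔ a = 1 ∧ b = 1 := by decide
  have hprod : (∏ j ∈ Finset.Ico (i + 1) ℓ, (natBit x j + natBit y j + 1)) = 1 ↔
      ∀ j ∈ Finset.Ico (i + 1) ℓ, natBit x j + natBit y j + 1 = 1 := by
    constructor
    · intro h j hj
      by_contra hne
      have hz : natBit x j + natBit y j + 1 = 0 :=
        (by decide : ∀ a : ZMod 2, a ≠ 1 → a = 0) _ hne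
      rw [Finset.prod_eq_zero hj hz] at h
      exact absurd h (by decide)
    · exact Finset.prod_eq_one
  unfold compC
  rw [hmul, hmul, hprod]
  have hy1 : natBit y i = 1 ↔ y.testBit i = true := by
    unfold natBit; cases y.testBit i <;> simp <;> decide
  have hx1 : (1 - natBit x i) = 1 ↔ x.testBit i = false := by
    unfold natBit; cases x.testBit i <;> simp <;> decide
  rw [hy1, hx1, and_assoc]
  simp only [Finset.mem_Ico, factor_eq_one_iff]
  constructor
  · rintro ⟨h1, h2, h3⟩
    exact ⟨h1, h2, fun j hij hjl => h3 j ⟨hij, hjl⟩⟩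
  · rintro ⟨h1, h2, h3⟩
    exact ⟨h1, h2, fun j ⟨hij, hjl⟩ => h3 j hij hjl⟩

/-- Properties of the `c_i` of the secure comparison protocol `π_DC`:
(a) `x < y` iff some `c_i = 1`; (b) at most one `c_i` equals `1`;
consequently, if `x ≥ y` then all `c_i = 0`, and if `x < y` then exactly one
`c_i` equals `1`. -/
theorem secure_comparison_ci_properties (ℓ : ℕ) (hℓ : 1 ≤ ℓ)
    (x y : ℕ) (hx : x < 2 ^ ℓ) (hy : y < 2 ^ ℓ) :
    (x < y ↔ ∃ i, i < ℓ ∧ compC ℓ x y i = 1) ∧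
    (∀ i j, i < ℓ → j < ℓ → compC ℓ x y i = 1 → compC ℓ x y j = 1 → i = j) ∧
    (y ≤ x → ∀ i, i < ℓ → compC ℓ x y i = 0) ∧
    (x < y → ∃! i, i < ℓ ∧ compC ℓ x y i = 1) := by
  have htop : ∀ j, ℓ ≤ j → x.testBit j = y.testBit j := by
    intro j hj
    rw [Nat.testBit_lt_two_pow (lt_of_lt_of_le hx (Nat.pow_le_pow_right (by norm_num) hj)),
        Nat.testBit_lt_two_pow (lt_of_lt_of_le hy (Nat.pow_le_pow_right (by norm_num) hj))]
  -- (a) forward direction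
  have hfwd : x < y → ∃ i, i < ℓ ∧ compC ℓ x y i = 1 := by
    intro hlt
    have hne : x ≠ y := hlt.ne
    have : ∃ i, x.testBit i ≠ y.testBit i := by
      by_contra h
      push_neg at h
      exact hne (Nat.eq_of_testBit_eq h)
    -- take the greatest differing bit; all differing bits are < ℓ
    have hbd : ∀ i, x.testBit i ≠ y.testBit i → i < ℓ := by
      intro i hi
      by_contra h
      exact hi (htop i (le_of_not_gt h))
    obtain ⟨i, hi⟩ := this
    -- find maximal differing index by strong induction downward: use Finset max
    set S : Finset ℕ := (Finset.range ℓ).filter (fun i => x.testBit i ≠ y.testBit i) with hS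
    have hiS : i ∈ S := Finset.mem_filter.2 ⟨Finset.mem_range.2 (hbd i hi), hi⟩
    obtain ⟨m, hmS, hmax⟩ := S.exists_max_image id ⟨i, hiS⟩
    obtain ⟨hmℓ, hmne⟩ := Finset.mem_filter.1 hmS
    have hmℓ := Finset.mem_range.1 hmℓ
    have hagree : ∀ j, m < j → x.testBit j = y.testBit j := by
      intro j hj
      by_contra h
      have : j ∈ S := Finset.mem_filter.2 ⟨Finset.mem_range.2 (hbd j h), h⟩
      exact absurd (hmax j this) (not_le.2 hj)
    -- at m, must be x bit false, y bit true (else x > y)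
    cases hxm : x.testBit m with
    | true =>
      have hym : y.testBit m = false := by
        cases hym : y.testBit m
        · rfl
        · exact absurd (hxm.trans hym.symm) hmne
      have : y < x := Nat.lt_of_testBit m hym hxm (fun j hj => (hagree j hj).symm)
      omega
    | false =>
      have hym : y.testBit m = true := by
        cases hym : y.testBit m
        · exact absurd (hxm.trans hym.symm) hmne
        · rfl
      exact ⟨m, hmℓ, (compC_eq_one_iff ℓ x y m).2 ⟨hym, hxm, fun j hj _ => hagree j hj⟩⟩
  -- (a) backward direction
  have hbwd : ∀ i, i < ℓ → compC ℓ x y i = 1 → x < y := by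
    intro i hiℓ hc
    obtain ⟨hyi, hxi, hag⟩ := (compC_eq_one_iff ℓ x y i).1 hc
    refine Nat.lt_of_testBit i hxi hyi (fun j hj => ?_)
    rcases lt_or_ge j ℓ with h | h
    · exact hag j hj h
    · exact htop j h
  -- uniqueness
  have huniq : ∀ i j, i < ℓ → j < ℓ → compC ℓ x y i = 1 → compC ℓ x y j = 1 → i = j := by
    intro i j hiℓ hjℓ hci hcj
    by_contra hne
    rcases lt_or_gt_of_ne hne with h | h
    · obtain ⟨_, _, hag⟩ := (compC_eq_one_iff ℓ x y i).1 hci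
      obtain ⟨hyj, hxj, _⟩ := (compC_eq_one_iff ℓ x y j).1 hcj
      rw [hag j h hjℓ, hyj] at hxj
      exact Bool.noConfusion hxj
    · obtain ⟨_, _, hag⟩ := (compC_eq_one_iff ℓ x y j).1 hcj
      obtain ⟨hyi, hxi, _⟩ := (compC_eq_one_iff ℓ x y i).1 hci
      rw [hag i h hiℓ, hyi] at hxi
      exact Bool.noConfusion hxi
  refine ⟨⟨hfwd, fun ⟨i, hiℓ, hc⟩ => hbwd i hiℓ hc⟩, huniq, ?_, ?_⟩
  · intro hyx i hiℓ
    by_contra h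
    have : compC ℓ x y i = 1 :=
      (by decide : ∀ a : ZMod 2, a ≠ 0 → a = 1) _ h
    exact absurd (hbwd i hiℓ this) (not_lt.2 hyx)
  · intro hlt
    obtain ⟨i, hiℓ, hc⟩ := hfwd hlt
    exact ⟨i, ⟨hiℓ, hc⟩, fun j ⟨hjℓ, hcj⟩ => huniq j i hjℓ hiℓ hcj hc⟩
end

section
/- Let $\ell \geq 1$ and let $x, y < 2^{\ell}$ be natural numbers with bits $x_i, y_i \in \mathbb{Z}/2\mathbb{Z}$ for $0 \le i < \ell$. Define in $\mathbb{Z}/2\mathbb{Z}$: $c_i = y_i(1 - x_i)\prod_{j=i+1}^{\ell-1}(x_j + y_j + 1)$ and $w = 1 + \sum_{i=0}^{\ell-1} c_i$. Then $w = 1$ if and only if $x \geq y$, and $w = 0$ if and only if $x < y$. (This is the correctness of the secure distributed comparison protocol $\pi_{DC}$.) -/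
lemma natBit_mod {n : ℕ} {j : ℕ} (hj : j < n) (x : ℕ) :
    natBit (x % 2 ^ n) j = natBit x j := by
  simp [natBit, Nat.testBit_mod_two_pow, hj]

lemma key (ℓ : ℕ) : ∀ x y : ℕ, x < 2 ^ ℓ → y < 2 ^ ℓ →
    (∑ i ∈ Finset.range ℓ, (natBit y i * (1 - natBit x i) *
      ∏ j ∈ Finset.Ico (i + 1) ℓ, (natBit x j + natBit y j + 1)))
      = if x < y then 1 else 0 := by
  induction ℓ with
  | zero =>
      intro x y hx hy
      interval_cases x
      interval_cases y
      simp
  | succ n ih =>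
      intro x y hx hy
      rw [Finset.sum_range_succ]
      have hrw : ∀ i ∈ Finset.range n,
          natBit y i * (1 - natBit x i) *
            ∏ j ∈ Finset.Ico (i + 1) (n + 1), (natBit x j + natBit y j + 1)
          = (natBit (y % 2 ^ n) i * (1 - natBit (x % 2 ^ n) i) *
            ∏ j ∈ Finset.Ico (i + 1) n, (natBit (x % 2 ^ n) j + natBit (y % 2 ^ n) j + 1))
            * (natBit x n + natBit y n + 1) := by
        intro i hi
        rw [Finset.mem_range] at hi
        have e1 : natBit (y % 2 ^ n) i = natBit y i := natBit_mod hi y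
        have e2 : natBit (x % 2 ^ n) i = natBit x i := natBit_mod hi x
        have e3 : (∏ j ∈ Finset.Ico (i + 1) n,
              (natBit (x % 2 ^ n) j + natBit (y % 2 ^ n) j + 1))
            = ∏ j ∈ Finset.Ico (i + 1) n, (natBit x j + natBit y j + 1) :=
          Finset.prod_congr rfl (fun j hj => by
            rw [Finset.mem_Ico] at hj
            rw [natBit_mod hj.2 x, natBit_mod hj.2 y])
        rw [e1, e2, e3, Finset.prod_Ico_succ_top (by omega : i + 1 ≤ n)]
        ring
      rw [Finset.sum_congr rfl hrw, ← Finset.sum_mul]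
      have hp : 0 < 2 ^ n := Nat.pow_pos (by norm_num)
      rw [ih (x % 2 ^ n) (y % 2 ^ n) (Nat.mod_lt _ hp) (Nat.mod_lt _ hp)]
      rw [Finset.Ico_self, Finset.prod_empty]
      have hxd : x / 2 ^ n < 2 := by
        apply Nat.div_lt_of_lt_mul; rw [pow_succ] at hx; omega
      have hyd : y / 2 ^ n < 2 := by
        apply Nat.div_lt_of_lt_mul; rw [pow_succ] at hy; omega
      have hxe := Nat.div_add_mod x (2 ^ n)
      have hye := Nat.div_add_mod y (2 ^ n)
      have hxm : x % 2 ^ n < 2 ^ n := Nat.mod_lt _ hp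
      have hym : y % 2 ^ n < 2 ^ n := Nat.mod_lt _ hp
      have htx : x.testBit n = decide (x / 2 ^ n % 2 = 1) := Nat.testBit_eq_decide_div_mod_eq
      have hty : y.testBit n = decide (y / 2 ^ n % 2 = 1) := Nat.testBit_eq_decide_div_mod_eq
      simp only [natBit, htx, hty]
      interval_cases hu : (x / 2 ^ n) <;> interval_cases hv : (y / 2 ^ n) <;>
        by_cases hxy : x % 2 ^ n < y % 2 ^ n <;> by_cases hlt : x < y <;>
        simp [hxy, hlt] <;>
        first
          | decide
          | (exfalso; omega)

/-- Correctness of the secure distributed comparison protocol `π_DC`: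
with `c_i = y_i (1 - x_i) ∏_{j=i+1}^{ℓ-1} (x_j + y_j + 1)` and
`w = 1 + ∑_{i<ℓ} c_i` (arithmetic in `ℤ/2ℤ`), one has `w = 1` iff `x ≥ y`
and `w = 0` iff `x < y`. -/
theorem secure_comparison_correct (ℓ : ℕ) (hℓ : 1 ≤ ℓ)
    (x y : ℕ) (hx : x < 2 ^ ℓ) (hy : y < 2 ^ ℓ)
    (c : ℕ → ZMod 2)
    (hc : ∀ i, c i = natBit y i * (1 - natBit x i) *
        ∏ j ∈ Finset.Ico (i + 1) ℓ, (natBit x j + natBit y j + 1))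
    (w : ZMod 2) (hw : w = 1 + ∑ i ∈ Finset.range ℓ, c i) :
    (w = 1 ↔ y ≤ x) ∧ (w = 0 ↔ x < y) := by
  have hs : (∑ i ∈ Finset.range ℓ, c i) = if x < y then 1 else 0 := by
    rw [Finset.sum_congr rfl (fun i _ => hc i)]
    exact key ℓ x y hx hy
  rw [hs] at hw
  by_cases h : x < y
  · rw [if_pos h] at hw
    have hw0 : w = 0 := by rw [hw]; decide
    constructor
    · constructor
      · intro hw1; rw [hw0] at hw1; exact absurd hw1 (by decide)
      · intro hle; omega
    · exact ⟨fun _ => h, fun _ => hw0⟩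
  · rw [if_neg h] at hw
    have hw1 : w = 1 := by rw [hw]; decide
    constructor
    · exact ⟨fun _ => by omega, fun _ => hw1⟩
    · constructor
      · intro hw0; rw [hw1] at hw0; exact absurd hw0 (by decide)
      · intro hlt; omega
end

section
/- Let $\ell \geq 1$ and let $a, b < 2^{\ell}$ be natural numbers with bits $a_i, b_i \in \mathbb{Z}/2\mathbb{Z}$ for $0 \le i < \ell$. Define in $\mathbb{Z}/2\mathbb{Z}$: $y_i = a_i + b_i$; $c_0 = a_0 b_0$; for $1 \le i < \ell$, $c_i = (y_i c_{i-1} + 1)(a_i b_i + 1) + 1$; and $x_0 = y_0$, $x_i = y_i + c_{i-1}$ for $1 \le i < \ell$. Then for every $i < \ell$, $x_i$ equals the $i$-th binary digit of $(a + b) \bmod 2^{\ell}$. (This is the correctness of the secure bit-decomposition protocol $\pi_{Decomp}$: the computed bits are exactly the bits of the value $x = a + b \bmod 2^{\ell}$ shared by Alice and Bob.) -/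
/-- The carries of the bit-decomposition protocol `π_Decomp` applied to the
natural numbers `a` and `b`: `c_0 = a_0 b_0` and
`c_i = ((a_i + b_i) c_{i-1} + 1)(a_i b_i + 1) + 1` (arithmetic in `ℤ/2ℤ`). -/
def decompCarry (a b : ℕ) : ℕ → ZMod 2
  | 0 => natBit a 0 * natBit b 0
  | i + 1 =>
      ((natBit a (i + 1) + natBit b (i + 1)) * decompCarry a b i + 1) *
          (natBit a (i + 1) * natBit b (i + 1) + 1) + 1

/-- The output bits of the bit-decomposition protocol `π_Decomp`:
`x_0 = a_0 + b_0` and `x_i = a_i + b_i + c_{i-1}` (arithmetic in `ℤ/2ℤ`). -/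
def decompBit (a b : ℕ) : ℕ → ZMod 2
  | 0 => natBit a 0 + natBit b 0
  | i + 1 => natBit a (i + 1) + natBit b (i + 1) + decompCarry a b i

lemma mod_succ_eq (n i : ℕ) :
    n % 2 ^ (i + 1) = n % 2 ^ i + 2 ^ i * (if n.testBit i then 1 else 0) := by
  rw [Nat.mod_pow_succ, Nat.testBit_eq_decide_div_mod_eq]
  have h3 : n / 2 ^ i % 2 < 2 := Nat.mod_lt _ (by norm_num)
  split_ifs with h <;> simp only [decide_eq_true_iff] at h
  · rw [h]
  · have h0 : n / 2 ^ i % 2 = 0 := by omega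
    rw [h0]

lemma testBit_iff_mod (n i : ℕ) : n.testBit i = true ↔ 2 ^ i ≤ n % 2 ^ (i + 1) := by
  have h := mod_succ_eq n i
  have h2 : n % 2 ^ i < 2 ^ i := Nat.mod_lt _ (Nat.two_pow_pos i)
  rcases ht : n.testBit i <;> simp [ht] at h ⊢ <;> omega

lemma carry_eq (a b : ℕ) : ∀ i, decompCarry a b i =
    if 2 ^ (i + 1) ≤ a % 2 ^ (i + 1) + b % 2 ^ (i + 1) then 1 else 0 := by
  intro i
  induction i with
  | zero =>
    have ha := testBit_iff_mod a 0
    have hb := testBit_iff_mod b 0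
    have ha2 : a % 2 < 2 := Nat.mod_lt _ (by norm_num)
    have hb2 : b % 2 < 2 := Nat.mod_lt _ (by norm_num)
    simp only [decompCarry, natBit, pow_zero, pow_one] at *
    rcases hta : a.testBit 0 <;> rcases htb : b.testBit 0 <;>
      simp [hta, htb] at ha hb ⊢ <;>
      first
        | (rw [if_pos (by omega)])
        | (rw [if_neg (by omega)])
        | omega
  | succ i ih =>
    have ha2 : a % 2 ^ (i + 1) < 2 ^ (i + 1) := Nat.mod_lt _ (Nat.two_pow_pos _)
    have hb2 : b % 2 ^ (i + 1) < 2 ^ (i + 1) := Nat.mod_lt _ (Nat.two_pow_pos _)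
    have e1 := mod_succ_eq a (i + 1)
    have e2 := mod_succ_eq b (i + 1)
    have hpow : (2 : ℕ) ^ (i + 1 + 1) = 2 ^ (i + 1) + 2 ^ (i + 1) := by ring
    simp only [decompCarry, natBit, ih]
    rcases h1 : a.testBit (i + 1) <;> rcases h2 : b.testBit (i + 1) <;>
      rcases h3 : decide (2 ^ (i + 1) ≤ a % 2 ^ (i + 1) + b % 2 ^ (i + 1)) <;>
      simp only [decide_eq_true_iff, decide_eq_false_iff_not] at h3 <;>
      simp only [h1, h2, h3, if_true, if_false, Bool.false_eq_true, if_pos, if_neg,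
        not_false_iff, ite_true, ite_false] at e1 e2 ⊢ <;>
      (first
        | (rw [if_pos (by omega)])
        | (rw [if_neg (by omega)])) <;>
      decide

lemma sum_mod_cases (a b m : ℕ) (hm : 0 < m) :
    (a + b) % m = a % m + b % m ∨ (a + b) % m + m = a % m + b % m := by
  have ha : a % m < m := Nat.mod_lt _ hm
  have hb : b % m < m := Nat.mod_lt _ hm
  rw [Nat.add_mod]
  rcases le_or_gt m (a % m + b % m) with h | h
  · right
    rw [Nat.mod_eq_sub_mod h, Nat.mod_eq_of_lt (by omega)]
    omega
  · left
    rw [Nat.mod_eq_of_lt h]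

lemma decomp_bit_eq (a b : ℕ) : ∀ i, decompBit a b i = natBit (a + b) i := by
  intro i
  cases i with
  | zero =>
    have ha := testBit_iff_mod a 0
    have hb := testBit_iff_mod b 0
    have hab := testBit_iff_mod (a + b) 0
    have ha2 : a % 2 < 2 := Nat.mod_lt _ (by norm_num)
    have hb2 : b % 2 < 2 := Nat.mod_lt _ (by norm_num)
    have hS := sum_mod_cases a b 2 (by norm_num)
    simp only [decompBit, natBit, pow_zero, pow_one] at *
    rcases h1 : a.testBit 0 <;> rcases h2 : b.testBit 0 <;> rcases h : (a + b).testBit 0 <;>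
      simp only [h1, h2, h, eq_self_iff_true, true_iff, false_iff, if_true, if_false,
        Bool.false_eq_true, iff_true, iff_false,
        Bool.true_eq_false, ite_true, ite_false] at ha hb hab ⊢ <;>
      rcases hS with hS | hS <;>
      first
        | decide
        | (exfalso; omega)
  | succ i =>
    have ha2 : a % 2 ^ (i + 1) < 2 ^ (i + 1) := Nat.mod_lt _ (Nat.two_pow_pos _)
    have hb2 : b % 2 ^ (i + 1) < 2 ^ (i + 1) := Nat.mod_lt _ (Nat.two_pow_pos _)
    have e1 := mod_succ_eq a (i + 1)
    have e2 := mod_succ_eq b (i + 1)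
    have t3 := testBit_iff_mod (a + b) (i + 1)
    have hS := sum_mod_cases a b (2 ^ (i + 1 + 1)) (Nat.two_pow_pos _)
    have hab2 : (a + b) % 2 ^ (i + 1 + 1) < 2 ^ (i + 1 + 1) :=
      Nat.mod_lt _ (Nat.two_pow_pos _)
    have hpow : (2 : ℕ) ^ (i + 1 + 1) = 2 ^ (i + 1) + 2 ^ (i + 1) := by ring
    simp only [decompBit, natBit, carry_eq]
    rcases h1 : a.testBit (i + 1) <;> rcases h2 : b.testBit (i + 1) <;>
      rcases h3 : decide (2 ^ (i + 1) ≤ a % 2 ^ (i + 1) + b % 2 ^ (i + 1)) <;>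
      rcases h : (a + b).testBit (i + 1) <;>
      simp only [decide_eq_true_iff, decide_eq_false_iff_not] at h3 <;>
      simp only [h1, h2, h3, h, eq_self_iff_true, true_iff, false_iff, if_true, if_false,
        Bool.false_eq_true, Bool.true_eq_false,
        iff_true, iff_false, not_false_iff, ite_true, ite_false] at e1 e2 t3 ⊢ <;>
      rcases hS with hS | hS <;>
      first
        | decide
        | (exfalso; omega)

/-- Correctness of the secure bit-decomposition protocol `π_Decomp`: for
`a, b < 2^ℓ`, the computed bits `x_i` are exactly the binary digits of
`(a + b) mod 2^ℓ`, i.e., of the value shared by Alice and Bob. -/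
theorem bit_decomposition_correct (ℓ : ℕ) (hℓ : 1 ≤ ℓ)
    (a b : ℕ) (ha : a < 2 ^ ℓ) (hb : b < 2 ^ ℓ) :
    ∀ i, i < ℓ → decompBit a b i = natBit ((a + b) % 2 ^ ℓ) i := by
  intro i hi
  have h : natBit ((a + b) % 2 ^ ℓ) i = natBit (a + b) i := by
    simp [natBit, Nat.testBit_mod_two_pow, hi]
  rw [h, decomp_bit_eq]
end

section
/- Let $\ell \geq 1$ and let $a, b < 2^{\ell}$ be natural numbers with bits $a_i, b_i \in \mathbb{Z}/2\mathbb{Z}$. Define the carries $c_0 = a_0 b_0$ and $c_i = (\,(a_i + b_i)c_{i-1} + 1\,)(a_i b_i + 1) + 1$ in $\mathbb{Z}/2\mathbb{Z}$ for $1 \le i < \ell$. Then for every $i < \ell$, $c_i = 1$ if and only if $(a \bmod 2^{i+1}) + (b \bmod 2^{i+1}) \geq 2^{i+1}$; that is, $c_i$ is exactly the carry out of position $i$ in the binary addition of $a$ and $b$. -/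
lemma carry_key (a b : ℕ) :
    ∀ i, (decompCarry a b i = 1 ↔ 2 ^ (i + 1) ≤ a % 2 ^ (i + 1) + b % 2 ^ (i + 1)) := by
  intro i
  induction i with
  | zero =>
    have h2a : a % 2 < 2 := Nat.mod_lt _ (by norm_num)
    have h2b : b % 2 < 2 := Nat.mod_lt _ (by norm_num)
    simp only [decompCarry, natBit, pow_one, Nat.testBit_eq_decide_div_mod_eq, pow_zero, Nat.div_one,
      decide_eq_true_eq]
    by_cases hx : a % 2 = 1 <;> by_cases hy : b % 2 = 1 <;>
      simp only [hx, hy, if_true, if_false] <;>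
      constructor <;> intro h
    · omega
    · decide
    all_goals first
      | exact absurd h (by decide)
      | (exfalso; omega)
  | succ i ih =>
    have hzz : ∀ z : ZMod 2, z = 0 ∨ z = 1 := by decide
    have hma := Nat.mod_pow_succ (x := a) (b := 2) (k := i + 1)
    have hmb := Nat.mod_pow_succ (x := b) (b := 2) (k := i + 1)
    have hA : a % 2 ^ (i + 1) < 2 ^ (i + 1) := Nat.mod_lt _ (by positivity)
    have hB : b % 2 ^ (i + 1) < 2 ^ (i + 1) := Nat.mod_lt _ (by positivity)
    have hd1 : a / 2 ^ (i + 1) % 2 < 2 := Nat.mod_lt _ (by norm_num)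
    have hd2 : b / 2 ^ (i + 1) % 2 < 2 := Nat.mod_lt _ (by norm_num)
    have hpow : (2:ℕ) ^ (i + 1 + 1) = 2 ^ (i + 1) + 2 ^ (i + 1) := by ring
    rw [hma, hmb, hpow]
    rcases hzz (decompCarry a b i) with hc | hc <;> rw [hc] at ih
    · have hI : ¬ 2 ^ (i + 1) ≤ a % 2 ^ (i + 1) + b % 2 ^ (i + 1) :=
        fun hh => absurd (ih.mpr hh) (by decide)
      simp only [decompCarry, natBit, Nat.testBit_eq_decide_div_mod_eq, decide_eq_true_eq, hc]
      rcases (show a / 2 ^ (i + 1) % 2 = 0 ∨ a / 2 ^ (i + 1) % 2 = 1 by omega) with hx | hx <;>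
      rcases (show b / 2 ^ (i + 1) % 2 = 0 ∨ b / 2 ^ (i + 1) % 2 = 1 by omega) with hy | hy <;>
        simp only [hx, hy, mul_zero, mul_one, add_zero, zero_ne_one, one_ne_zero,
          if_true, if_false, Nat.zero_ne_one, Nat.one_ne_zero, ite_true, ite_false] <;>
        constructor <;> intro h <;>
        first
          | exact absurd h (by decide)
          | decide
          | omega
          | (exfalso; omega)
    · have hI : 2 ^ (i + 1) ≤ a % 2 ^ (i + 1) + b % 2 ^ (i + 1) := ih.mp rfl
      simp only [decompCarry, natBit, Nat.testBit_eq_decide_div_mod_eq, decide_eq_true_eq, hc]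
      rcases (show a / 2 ^ (i + 1) % 2 = 0 ∨ a / 2 ^ (i + 1) % 2 = 1 by omega) with hx | hx <;>
      rcases (show b / 2 ^ (i + 1) % 2 = 0 ∨ b / 2 ^ (i + 1) % 2 = 1 by omega) with hy | hy <;>
        simp only [hx, hy, mul_zero, mul_one, add_zero, zero_ne_one, one_ne_zero,
          if_true, if_false, Nat.zero_ne_one, Nat.one_ne_zero, ite_true, ite_false] <;>
        constructor <;> intro h <;>
        first
          | exact absurd h (by decide)
          | decide
          | omega
          | (exfalso; omega)

/-- The carries computed by the bit-decomposition protocol `π_Decomp` are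
exactly the carries of the binary addition of `a` and `b`: for `i < ℓ`,
`c_i = 1` iff `(a mod 2^(i+1)) + (b mod 2^(i+1)) ≥ 2^(i+1)`. -/
theorem bit_decomposition_carry_correct (ℓ : ℕ) (hℓ : 1 ≤ ℓ)
    (a b : ℕ) (ha : a < 2 ^ ℓ) (hb : b < 2 ^ ℓ) :
    ∀ i, i < ℓ →
      (decompCarry a b i = 1 ↔ 2 ^ (i + 1) ≤ a % 2 ^ (i + 1) + b % 2 ^ (i + 1)) := by
  intro i _
  exact carry_key a b i
end

section
/- Let $\ell \geq 1$, let $z < 2^{\ell}$ be a natural number, and let $z_A, z_B \in \mathbb{Z}/2^{\ell}\mathbb{Z}$ be any additive shares of $z$, i.e., $z_A + z_B = z$ in $\mathbb{Z}/2^{\ell}\mathbb{Z}$. Let $a, b < 2^{\ell}$ be the natural-number representatives of $z_A, z_B$, with bits $a_i, b_i \in \mathbb{Z}/2\mathbb{Z}$. Define in $\mathbb{Z}/2\mathbb{Z}$: $y_i = a_i + b_i$, $c_0 = a_0 b_0$, $c_i = (y_i c_{i-1} + 1)(a_i b_i + 1) + 1$ for $1 \le i < \ell$, and $x_0 = y_0$,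 $x_i = y_i + c_{i-1}$ for $1 \le i < \ell$. Then for every $i < \ell$, $x_i$ equals the $i$-th binary digit of $z$. (Applying the bit-decomposition recursion to the representatives of any additive sharing of $z$ over $\mathbb{Z}/2^{\ell}\mathbb{Z}$ recovers exactly the bits of $z$.) -/
lemma decomp_key (a b : ℕ) : ∀ i,
    decompBit a b i = natBit (a + b) i ∧
    decompCarry a b i =
      if 2 ^ (i + 1) ≤ a % 2 ^ (i + 1) + b % 2 ^ (i + 1) then 1 else 0 := by
  intro i
  induction i with
  | zero =>
      have hab : (a + b) % 2 = (a % 2 + b % 2) % 2 := Nat.add_mod a b 2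
      rcases Nat.mod_two_eq_zero_or_one a with hA | hA <;>
        rcases Nat.mod_two_eq_zero_or_one b with hB | hB <;>
        (have hs : (a + b) % 2 = (a % 2 + b % 2) % 2 := hab) <;>
        rw [hA, hB] at hs <;> norm_num at hs <;>
        constructor <;>
        simp [decompBit, decompCarry, natBit, Nat.testBit_eq_decide_div_mod_eq, hA, hB, hs] <;>
        first
          | decide
          | (rw [if_pos (by omega)]; decide)
          | (rw [if_neg (by omega)]; decide)
          | rfl
  | succ i ih =>
      obtain ⟨ih1, ih2⟩ := ih
      have hpos : 0 < 2 ^ (i + 1) := Nat.pow_pos (by norm_num)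
      have hra : a % 2 ^ (i + 1) < 2 ^ (i + 1) := Nat.mod_lt _ hpos
      have hrb : b % 2 ^ (i + 1) < 2 ^ (i + 1) := Nat.mod_lt _ hpos
      have hma : a % 2 ^ (i + 1 + 1) = a % 2 ^ (i + 1) + 2 ^ (i + 1) * (a / 2 ^ (i + 1) % 2) :=
        Nat.mod_pow_succ
      have hmb : b % 2 ^ (i + 1 + 1) = b % 2 ^ (i + 1) + 2 ^ (i + 1) * (b / 2 ^ (i + 1) % 2) :=
        Nat.mod_pow_succ
      have da := Nat.div_add_mod a (2 ^ (i + 1))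
      have db := Nat.div_add_mod b (2 ^ (i + 1))
      have hsum : (a + b) / 2 ^ (i + 1) =
          a / 2 ^ (i + 1) + b / 2 ^ (i + 1) +
            (a % 2 ^ (i + 1) + b % 2 ^ (i + 1)) / 2 ^ (i + 1) := by
        conv_lhs => rw [show a + b = 2 ^ (i + 1) * (a / 2 ^ (i + 1) + b / 2 ^ (i + 1)) +
          (a % 2 ^ (i + 1) + b % 2 ^ (i + 1)) by rw [Nat.mul_add]; omega]
        rw [Nat.mul_add_div hpos]
      have h2k1 : (2 : ℕ) ^ (i + 1 + 1) = 2 ^ (i + 1) + 2 ^ (i + 1) := by rw [pow_succ]; omega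
      rcases Nat.mod_two_eq_zero_or_one (a / 2 ^ (i + 1)) with hA | hA <;>
        rcases Nat.mod_two_eq_zero_or_one (b / 2 ^ (i + 1)) with hB | hB <;>
        by_cases hc : 2 ^ (i + 1) ≤ a % 2 ^ (i + 1) + b % 2 ^ (i + 1) <;>
      · first
          | have hcv : (a % 2 ^ (i + 1) + b % 2 ^ (i + 1)) / 2 ^ (i + 1) = 1 :=
              Nat.div_eq_of_lt_le (by omega) (by omega)
          | have hcv : (a % 2 ^ (i + 1) + b % 2 ^ (i + 1)) / 2 ^ (i + 1) = 0 :=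
              Nat.div_eq_of_lt (by omega)
        have hbit : (a + b) / 2 ^ (i + 1) % 2 =
            (a / 2 ^ (i + 1) % 2 + b / 2 ^ (i + 1) % 2 +
              (a % 2 ^ (i + 1) + b % 2 ^ (i + 1)) / 2 ^ (i + 1)) % 2 := by
          rw [hsum]; omega
        rw [hA, hB, hcv] at hbit
        rw [hA] at hma
        rw [hB] at hmb
        norm_num at hbit
        constructor
        · simp only [decompBit]
          rw [ih2]
          first | rw [if_pos hc] | rw [if_neg hc]
          simp [natBit, Nat.testBit_eq_decide_div_mod_eq, hA, hB, hbit] <;> decide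
        · simp only [decompCarry]
          rw [ih2]
          first | rw [if_pos hc] | rw [if_neg hc]
          simp [natBit, Nat.testBit_eq_decide_div_mod_eq, hA, hB]
          first
            | (rw [if_pos (by omega)]; try decide)
            | (rw [if_neg (by omega)]; try decide)
            | decide
            | rfl

/-- Applying the bit-decomposition recursion of `π_Decomp` to the natural
number representatives of any additive sharing `(z_A, z_B)` of `z` over
`ℤ/2^ℓℤ` recovers exactly the binary digits of `z`. -/
theorem bit_decomposition_of_shares_correct (ℓ : ℕ) (hℓ : 1 ≤ ℓ)
    (z : ℕ) (hz : z < 2 ^ ℓ)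
    (zA zB : ZMod (2 ^ ℓ)) (hshare : zA + zB = (z : ZMod (2 ^ ℓ)))
    (a b : ℕ) (ha : a = zA.val) (hb : b = zB.val) :
    ∀ i, i < ℓ → decompBit a b i = natBit z i := by
  haveI : NeZero (2 ^ ℓ) := ⟨pow_ne_zero _ two_ne_zero⟩
  have hval : (zA + zB).val = (a + b) % 2 ^ ℓ := by
    rw [ZMod.val_add, ha, hb]
  have hz' : z = (a + b) % 2 ^ ℓ := by
    rw [← hval, hshare, ZMod.val_natCast_of_lt hz]
  intro i hi
  rw [(decomp_key a b i).1]
  unfold natBit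
  rw [hz', Nat.testBit_mod_two_pow]
  simp [hi]
end
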